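/- 𝒦 ⊆ 𝒫(𝒢) is a coherent set of desirable gamble sets if and only if there exists a proper filter 𝔇 on the collection of coherent sets of desirable gambles (i.e. 𝔇 ≠ ∅, ∅ ∉ 𝔇, 𝔇 closed under finite intersections and under supersets within the collection of sets of coherent D's) such that B ∈ 𝒦 ⟺ {D coherent : B ∩ D ≠ ∅} ∈ 𝔇. -/

import Mathlib

open scoped BigOperators

universe u v

def GambleSpace (Ω : Type v) : Submodule ℝ (Ω → ℝ) where
  carrier := {f | ∃ M, ∀ ω, |f ω| ≤ M}
  add_mem' := by
    rintro f g ⟨M, hM⟩ ⟨N, hN⟩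
    exact ⟨M + N, fun ω => (abs_add_le _ _).trans (add_le_add (hM ω) (hN ω))⟩
  zero_mem' := ⟨0, fun ω => by simp⟩
  smul_mem' := by
    rintro c f ⟨M, hM⟩
    exact ⟨|c| * M, fun ω => by
      simpa [abs_mul] using mul_le_mul_of_nonneg_left (hM ω) (abs_nonneg c)⟩

/-- The type of gambles: bounded functions `Ω → ℝ`. -/
abbrev Gamble (Ω : Type v) := GambleSpace Ω

/-- Pointwise order on gambles: `gle f g` means `f ≤ g` pointwise. -/
def gle {Ω : Type v} (f g : Gamble Ω) : Prop := ∀ ω, (f : Ω → ℝ) ω ≤ (g : Ω → ℝ) ω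

/-- Gambles weakly dominating `0`. -/
def Gpos (Ω : Type v) : Set (Gamble Ω) := {g | gle 0 g ∧ g ≠ 0}

/-- Positive linear hull: finite positive combinations of members of `B`. -/
def posi {Ω : Type v} (B : Set (Gamble Ω)) : Set (Gamble Ω) :=
  {f | ∃ n : ℕ, 0 < n ∧ ∃ (l : Fin n → ℝ) (g : Fin n → Gamble Ω),
    (∀ i, 0 < l i) ∧ (∀ i, g i ∈ B) ∧ f = ∑ i, l i • g i}

/-- Natural extension of a set of gambles. -/
def desext {Ω : Type v} (E : Set (Gamble Ω)) : Set (Gamble Ω) := posi (E ∪ Gpos Ω)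

/-- Coherence for a set of desirable gambles. -/
def CoherentD {Ω : Type v} (D : Set (Gamble Ω)) : Prop :=
  (0 : Gamble Ω) ∉ D ∧ Gpos Ω ⊆ D ∧
  (∀ g ∈ D, ∀ l : ℝ, 0 < l → l • g ∈ D) ∧
  (∀ f ∈ D, ∀ g ∈ D, f + g ∈ D)

/-- Coherence for a set of desirable gamble sets. -/
def CoherentK {Ω : Type v} (K : Set (Set (Gamble Ω))) : Prop :=
  (∅ : Set (Gamble Ω)) ∉ K ∧
  (∀ A ∈ K, A \ {0} ∈ K) ∧
  (∀ g ∈ Gpos Ω, ({g} : Set (Gamble Ω)) ∈ K) ∧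
  (∀ A ∈ K, ∀ B : Set (Gamble Ω), A ⊆ B → B ∈ K) ∧
  (∀ A ∈ K, ∀ F : Gamble Ω → Gamble Ω, (∀ g ∈ A, gle g (F g)) → F '' A ∈ K) ∧
  (∀ n : ℕ, 0 < n → ∀ A : Fin n → Set (Gamble Ω), (∀ i, A i ∈ K) →
    ∀ F : (Fin n → Gamble Ω) → Gamble Ω,
    (∀ g : Fin n → Gamble Ω, (∀ i, g i ∈ A i) → F g ∈ posi (Set.range g)) →
    {b | ∃ g : Fin n → Gamble Ω, (∀ i, g i ∈ A i) ∧ b = F g} ∈ K)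

/-- The infinite addition axiom. -/
def KAddInf {Ω : Type v} (K : Set (Set (Gamble Ω))) : Prop :=
  ∀ (I : Type v) (A : I → Set (Gamble Ω)), (∀ i, A i ∈ K) →
    ∀ F : (I → Gamble Ω) → Gamble Ω,
    (∀ g : I → Gamble Ω, (∀ i, g i ∈ A i) → F g ∈ posi (Set.range g)) →
    {b | ∃ g : I → Gamble Ω, (∀ i, g i ∈ A i) ∧ b = F g} ∈ K

/-- Natural extension of a set of gamble sets (nonempty case). -/
def ExtK {Ω : Type v} (𝒜 : Set (Set (Gamble Ω))) : Set (Set (Gamble Ω)) :=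
  {B | ∃ n : ℕ, 0 < n ∧ ∃ A : Fin n → Set (Gamble Ω), (∀ i, A i ∈ 𝒜) ∧
    ∀ g : Fin n → Gamble Ω, (∀ i, g i ∈ A i) →
      (0 : Gamble Ω) ∉ desext (Set.range g) → ∃ f ∈ B, f ∈ desext (Set.range g)}

section Helpers
variable {Ω : Type v}

lemma posi_mono {S T : Set (Gamble Ω)} (h : S ⊆ T) : posi S ⊆ posi T := by
  rintro f ⟨n, hn, l, g, hl, hg, rfl⟩
  exact ⟨n, hn, l, g, hl, fun i => h (hg i), rfl⟩

lemma mem_posi_self {S : Set (Gamble Ω)} {g : Gamble Ω} (h : g ∈ S) : g ∈ posi S :=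
  ⟨1, one_pos, fun _ => 1, fun _ => g, fun _ => one_pos, fun _ => h, by simp⟩

lemma posi_add {S : Set (Gamble Ω)} {p q : Gamble Ω} (hp : p ∈ posi S) (hq : q ∈ posi S) :
    p + q ∈ posi S := by
  obtain ⟨n, hn, l, g, hl, hg, rfl⟩ := hp
  obtain ⟨m, hm, l', g', hl', hg', rfl⟩ := hq
  refine ⟨n + m, by omega, Fin.append l l', Fin.append g g', ?_, ?_, ?_⟩
  · intro i
    refine Fin.addCases (fun j => ?_) (fun j => ?_) i
    · rw [Fin.append_left]; exact hl j
    · rw [Fin.append_right]; exact hl' j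
  · intro i
    refine Fin.addCases (fun j => ?_) (fun j => ?_) i
    · rw [Fin.append_left]; exact hg j
    · rw [Fin.append_right]; exact hg' j
  · rw [Fin.sum_univ_add]
    simp [Fin.append_left, Fin.append_right]

lemma posi_smul {S : Set (Gamble Ω)} {p : Gamble Ω} {c : ℝ} (hc : 0 < c) (hp : p ∈ posi S) :
    c • p ∈ posi S := by
  obtain ⟨n, hn, l, g, hl, hg, rfl⟩ := hp
  refine ⟨n, hn, fun i => c * l i, g, fun i => mul_pos hc (hl i), hg, ?_⟩
  rw [Finset.smul_sum]
  simp [smul_smul]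


lemma posi_union {S T : Set (Gamble Ω)} {f : Gamble Ω} (hf : f ∈ posi (S ∪ T)) :
    f ∈ posi S ∨ f ∈ posi T ∨ ∃ p ∈ posi S, ∃ q ∈ posi T, f = p + q := by
  suffices h : ∀ n, 0 < n → ∀ (l : Fin n → ℝ) (g : Fin n → Gamble Ω),
      (∀ i, 0 < l i) → (∀ i, g i ∈ S ∪ T) →
      (∑ i, l i • g i) ∈ posi S ∨ (∑ i, l i • g i) ∈ posi T ∨
        ∃ p ∈ posi S, ∃ q ∈ posi T, (∑ i, l i • g i) = p + q by
    obtain ⟨n, hn, l, g, hl, hg, rfl⟩ := hf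
    exact h n hn l g hl hg
  intro n
  induction n with
  | zero => omega
  | succ n ih =>
    intro _ l g hl hg
    rw [Fin.sum_univ_succ]
    have hhead : l 0 • g 0 ∈ posi S ∨ l 0 • g 0 ∈ posi T := by
      rcases hg 0 with h | h
      · exact Or.inl (posi_smul (hl 0) (mem_posi_self h))
      · exact Or.inr (posi_smul (hl 0) (mem_posi_self h))
    rcases Nat.eq_zero_or_pos n with rfl | hn
    · rw [Finset.univ_eq_empty, Finset.sum_empty, add_zero]
      rcases hhead with h | h
      · exact Or.inl h
      · exact Or.inr (Or.inl h)
    · have htail := ih hn (fun i => l i.succ) (fun i => g i.succ)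
        (fun i => hl _) (fun i => hg _)
      rcases hhead with h₁ | h₁ <;> rcases htail with h₂ | h₂ | ⟨p, hp, q, hq, heq⟩
      · exact Or.inl (posi_add h₁ h₂)
      · exact Or.inr (Or.inr ⟨_, h₁, _, h₂, rfl⟩)
      · exact Or.inr (Or.inr ⟨_, posi_add h₁ hp, _, hq, by rw [heq, ← add_assoc]⟩)
      · exact Or.inr (Or.inr ⟨_, h₂, _, h₁, add_comm _ _⟩)
      · exact Or.inr (Or.inl (posi_add h₁ h₂))
      · exact Or.inr (Or.inr ⟨_, hp, _, posi_add h₁ hq, by rw [heq, add_left_comm]⟩)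

lemma posi_subset_coherent {D S : Set (Gamble Ω)} (hD : CoherentD D) (hS : S ⊆ D) :
    posi S ⊆ D := by
  suffices h : ∀ n, 0 < n → ∀ (l : Fin n → ℝ) (g : Fin n → Gamble Ω),
      (∀ i, 0 < l i) → (∀ i, g i ∈ S) → (∑ i, l i • g i) ∈ D by
    rintro f ⟨n, hn, l, g, hl, hg, rfl⟩
    exact h n hn l g hl hg
  intro n
  induction n with
  | zero => omega
  | succ n ih =>
    intro _ l g hl hg
    rw [Fin.sum_univ_succ]
    have hhead : l 0 • g 0 ∈ D := hD.2.2.1 _ (hS (hg 0)) _ (hl 0)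
    rcases Nat.eq_zero_or_pos n with rfl | hn
    · rw [Finset.univ_eq_empty, Finset.sum_empty, add_zero]; exact hhead
    · exact hD.2.2.2 _ hhead _ (ih hn (fun i => l i.succ) (fun i => g i.succ)
        (fun i => hl _) (fun i => hg _))

lemma gle_zero_apply {g : Gamble Ω} (h : gle 0 g) (ω : Ω) : 0 ≤ (g : Ω → ℝ) ω := by
  simpa using h ω

lemma gpos_exists_pos {g : Gamble Ω} (hg : g ∈ Gpos Ω) : ∃ ω, 0 < (g : Ω → ℝ) ω := by
  by_contra h
  push_neg at h
  apply hg.2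
  apply Subtype.ext
  funext ω
  have := le_antisymm (h ω) (gle_zero_apply hg.1 ω)
  simpa using this

lemma gamble_sum_apply {n : ℕ} (f : Fin n → Gamble Ω) (ω : Ω) :
    ((∑ i, f i : Gamble Ω) : Ω → ℝ) ω = ∑ i, (f i : Ω → ℝ) ω := by
  rw [AddSubmonoidClass.coe_finset_sum, Finset.sum_apply]

lemma posi_Gpos_subset : posi (Gpos Ω) ⊆ Gpos Ω := by
  rintro f ⟨n, hn, l, g, hl, hg, rfl⟩
  have hcoe : ∀ ω, ((∑ i, l i • g i : Gamble Ω) : Ω → ℝ) ω = ∑ i, l i * (g i : Ω → ℝ) ω := by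
    intro ω
    rw [gamble_sum_apply]
    simp
  have hnn : ∀ ω, ∀ i : Fin n, (0:ℝ) ≤ l i * (g i : Ω → ℝ) ω := fun ω i =>
    mul_nonneg (hl i).le (gle_zero_apply (hg i).1 ω)
  constructor
  · intro ω
    have h1 : ((0:Gamble Ω) : Ω → ℝ) ω = 0 := by simp
    rw [h1, hcoe]
    exact Finset.sum_nonneg (fun i _ => hnn ω i)
  · intro h0
    obtain ⟨ω, hω⟩ := gpos_exists_pos (hg ⟨0, hn⟩)
    have hpos : 0 < ((∑ i, l i • g i : Gamble Ω) : Ω → ℝ) ω := by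
      rw [hcoe]
      exact Finset.sum_pos' (fun i _ => hnn ω i)
        ⟨⟨0, hn⟩, Finset.mem_univ _, mul_pos (hl _) hω⟩
    rw [h0] at hpos
    simp at hpos

lemma desext_coherent {E : Set (Gamble Ω)} (h0 : (0 : Gamble Ω) ∉ desext E) :
    CoherentD (desext E) :=
  ⟨h0, fun g hg => mem_posi_self (Or.inr hg),
   fun g hg l hl => posi_smul hl hg,
   fun f hf g hg => posi_add hf hg⟩

lemma desext_zero {S : Set (Gamble Ω)} (h : (0 : Gamble Ω) ∈ desext S) :
    ∃ p ∈ posi S, gle p 0 := by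
  rcases posi_union h with h | h | ⟨p, hp, q, hq, heq⟩
  · exact ⟨0, h, fun ω => le_refl _⟩
  · exact absurd rfl (posi_Gpos_subset h).2
  · refine ⟨p, hp, fun ω => ?_⟩
    have hq' := gle_zero_apply (posi_Gpos_subset hq).1 ω
    have h2 := congrArg (fun x : Gamble Ω => (x : Ω → ℝ) ω) heq
    simp only [ZeroMemClass.coe_zero, Pi.zero_apply, AddMemClass.coe_add, Pi.add_apply] at h2
    simp only [ZeroMemClass.coe_zero, Pi.zero_apply]
    linarith

lemma desext_dominates {S : Set (Gamble Ω)} {f : Gamble Ω} (h : f ∈ desext S)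
    (hf : f ∉ Gpos Ω) : ∃ p ∈ posi S, gle p f := by
  rcases posi_union h with h | h | ⟨p, hp, q, hq, heq⟩
  · exact ⟨f, h, fun ω => le_refl _⟩
  · exact absurd (posi_Gpos_subset h) hf
  · refine ⟨p, hp, fun ω => ?_⟩
    have hq' := gle_zero_apply (posi_Gpos_subset hq).1 ω
    have h2 := congrArg (fun x : Gamble Ω => (x : Ω → ℝ) ω) heq
    simp only [AddMemClass.coe_add, Pi.add_apply] at h2
    linarith

end Helpers

section KeyLemma
variable {Ω : Type v}

lemma extK_mem {K : Set (Set (Gamble Ω))} (hK : CoherentK K) {B : Set (Gamble Ω)}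
    {n : ℕ} (hn : 0 < n) {A : Fin n → Set (Gamble Ω)} (hA : ∀ i, A i ∈ K)
    (hB : ∀ g : Fin n → Gamble Ω, (∀ i, g i ∈ A i) →
      (0 : Gamble Ω) ∉ desext (Set.range g) → ∃ f ∈ B, f ∈ desext (Set.range g)) :
    B ∈ K := by
  classical
  obtain ⟨h1, h2, h3, h4, h5, h6⟩ := hK
  by_cases hBG : ∃ f ∈ B, f ∈ Gpos Ω
  · obtain ⟨f, hfB, hfG⟩ := hBG
    exact h4 _ (h3 f hfG) B (Set.singleton_subset_iff.mpr hfB)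
  push_neg at hBG
  let Q : (Fin n → Gamble Ω) → Gamble Ω → Prop :=
    fun g p => p ∈ posi (Set.range g) ∧ (gle p 0 ∨ ∃ f ∈ B, gle p f)
  let F : (Fin n → Gamble Ω) → Gamble Ω :=
    fun g => if h : ∃ p, Q g p then h.choose else 0
  have hFspec : ∀ g, (∀ i, g i ∈ A i) → Q g (F g) := by
    intro g hg
    have hex : ∃ p, Q g p := by
      by_cases h0 : (0 : Gamble Ω) ∈ desext (Set.range g)
      · obtain ⟨p, hp, hple⟩ := desext_zero h0
        exact ⟨p, hp, Or.inl hple⟩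
      · obtain ⟨f, hfB, hfd⟩ := hB g hg h0
        obtain ⟨p, hp, hple⟩ := desext_dominates hfd (fun hG => hBG f hfB hG)
        exact ⟨p, hp, Or.inr ⟨f, hfB, hple⟩⟩
    have : F g = hex.choose := dif_pos hex
    rw [this]
    exact hex.choose_spec
  have hC : {b | ∃ g : Fin n → Gamble Ω, (∀ i, g i ∈ A i) ∧ b = F g} ∈ K :=
    h6 n hn A hA F (fun g hg => (hFspec g hg).1)
  let G : Gamble Ω → Gamble Ω :=
    fun c => if h : ∃ f ∈ B, gle c f then h.choose else 0
  have hGdom : ∀ c ∈ {b | ∃ g : Fin n → Gamble Ω, (∀ i, g i ∈ A i) ∧ b = F g},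
      gle c (G c) := by
    rintro c ⟨g, hg, rfl⟩
    by_cases h : ∃ f ∈ B, gle (F g) f
    · have hGc : G (F g) = h.choose := dif_pos h
      rw [hGc]
      exact h.choose_spec.2
    · have hGc : G (F g) = 0 := dif_neg h
      rw [hGc]
      rcases (hFspec g hg).2 with hle | hex
      · exact hle
      · exact absurd hex h
  have hGC := h2 _ (h5 _ hC G hGdom)
  refine h4 _ hGC B ?_
  rintro x ⟨⟨c, hc, rfl⟩, hx0⟩
  by_cases h : ∃ f ∈ B, gle c f
  · have hGc : G c = h.choose := dif_pos h
    rw [hGc]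
    exact h.choose_spec.1
  · exact absurd (dif_neg h : G c = 0) hx0

end KeyLemma

lemma exists_gpos (Ω : Type v) [Nonempty Ω] : ∃ g : Gamble Ω, g ∈ Gpos Ω := by
  refine ⟨⟨fun _ => 1, 1, fun ω => by simp⟩, fun ω => by simp, ?_⟩
  intro h
  have := congrArg (fun x : Gamble Ω => (x : Ω → ℝ) (Classical.arbitrary Ω)) h
  simp at this

theorem stmt17 {Ω : Type v} [Nonempty Ω] (K : Set (Set (Gamble Ω))) :
    CoherentK K ↔
    ∃ 𝔇 : Set (Set (Set (Gamble Ω))),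
      (∀ 𝔻 ∈ 𝔇, ∀ D ∈ 𝔻, CoherentD D) ∧
      𝔇.Nonempty ∧ (∅ : Set (Set (Gamble Ω))) ∉ 𝔇 ∧
      (∀ 𝔻₁ ∈ 𝔇, ∀ 𝔻₂ ∈ 𝔇, 𝔻₁ ∩ 𝔻₂ ∈ 𝔇) ∧
      (∀ 𝔻₁ ∈ 𝔇, ∀ 𝔻₂ : Set (Set (Gamble Ω)),
        (∀ D ∈ 𝔻₂, CoherentD D) → 𝔻₁ ⊆ 𝔻₂ → 𝔻₂ ∈ 𝔇) ∧
      (∀ B : Set (Gamble Ω),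
        B ∈ K ↔ {D : Set (Gamble Ω) | CoherentD D ∧ (B ∩ D).Nonempty} ∈ 𝔇) := by
  classical
  constructor
  · -- forward: construct the filter from finite intersections of S B, B ∈ K
    intro hK
    refine ⟨{𝔻 | (∀ D ∈ 𝔻, CoherentD D) ∧ ∃ n : ℕ, 0 < n ∧
        ∃ Bs : Fin n → Set (Gamble Ω), (∀ i, Bs i ∈ K) ∧
          {D | CoherentD D ∧ ∀ i, (Bs i ∩ D).Nonempty} ⊆ 𝔻},
      fun 𝔻 h => h.1, ?_, ?_, ?_, ?_, ?_⟩
    · -- nonempty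
      obtain ⟨g0, hg0⟩ := exists_gpos Ω
      exact ⟨{D | CoherentD D ∧ ∀ i : Fin 1, (({g0} : Set (Gamble Ω)) ∩ D).Nonempty},
        fun D hD => hD.1, 1, one_pos, fun _ => {g0},
        fun _ => hK.2.2.1 g0 hg0, subset_refl _⟩
    · -- empty set not a member
      rintro ⟨-, n, hn, Bs, hBsK, hsub⟩
      have hall : ∀ g : Fin n → Gamble Ω, (∀ i, g i ∈ Bs i) →
          (0 : Gamble Ω) ∈ desext (Set.range g) := by
        intro g hg
        by_contra h0
        exact hsub ⟨desext_coherent h0,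
          fun i => ⟨g i, hg i, mem_posi_self (Or.inl ⟨i, rfl⟩)⟩⟩
      exact hK.1 (extK_mem hK hn hBsK (fun g hg h0 => absurd (hall g hg) h0))
    · -- intersections
      rintro 𝔻₁ ⟨hc₁, n, hn, Bs, hBsK, hsub₁⟩ 𝔻₂ ⟨hc₂, m, hm, Cs, hCsK, hsub₂⟩
      refine ⟨fun D hD => hc₁ D hD.1, n + m, by omega, Fin.append Bs Cs, ?_, ?_⟩
      · intro i
        refine Fin.addCases (fun j => ?_) (fun j => ?_) i
        · rw [Fin.append_left]; exact hBsK j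
        · rw [Fin.append_right]; exact hCsK j
      · rintro D ⟨hD, hmeet⟩
        constructor
        · refine hsub₁ ⟨hD, fun i => ?_⟩
          have := hmeet (Fin.castAdd m i)
          rwa [Fin.append_left] at this
        · refine hsub₂ ⟨hD, fun i => ?_⟩
          have := hmeet (Fin.natAdd n i)
          rwa [Fin.append_right] at this
    · -- upward closure
      rintro 𝔻₁ ⟨-, n, hn, Bs, hBsK, hsub⟩ 𝔻₂ hc hsub2
      exact ⟨hc, n, hn, Bs, hBsK, hsub.trans hsub2⟩
    · -- the characterization
      intro B
      constructor
      · intro hB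
        refine ⟨fun D hD => hD.1, 1, one_pos, fun _ => B, fun _ => hB, ?_⟩
        rintro D ⟨hD, hmeet⟩
        exact ⟨hD, hmeet 0⟩
      · rintro ⟨-, n, hn, Bs, hBsK, hsub⟩
        apply extK_mem hK hn hBsK
        intro g hg h0
        have hmem : desext (Set.range g) ∈
            {D : Set (Gamble Ω) | CoherentD D ∧ (B ∩ D).Nonempty} :=
          hsub ⟨desext_coherent h0,
            fun i => ⟨g i, hg i, mem_posi_self (Or.inl ⟨i, rfl⟩)⟩⟩
        obtain ⟨f, hfB, hfD⟩ := hmem.2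
        exact ⟨f, hfB, hfD⟩
  · -- backward: a filter representation yields coherence
    rintro ⟨𝔇, hcohF, ⟨𝔻₀, h𝔻₀⟩, hempty, hinter, hup, hiff⟩
    refine ⟨?_, ?_, ?_, ?_, ?_, ?_⟩
    · -- K1
      intro h
      rw [hiff] at h
      have he : {D : Set (Gamble Ω) | CoherentD D ∧
          ((∅ : Set (Gamble Ω)) ∩ D).Nonempty} = ∅ := by
        ext D; simp
      rw [he] at h
      exact hempty h
    · -- K2
      intro A hA
      rw [hiff] at hA ⊢
      have he : {D : Set (Gamble Ω) | CoherentD D ∧ ((A \ {0}) ∩ D).Nonempty}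
          = {D | CoherentD D ∧ (A ∩ D).Nonempty} := by
        ext D
        simp only [Set.mem_setOf_eq, and_congr_right_iff]
        intro hD
        constructor
        · rintro ⟨f, ⟨hfA, -⟩, hfD⟩; exact ⟨f, hfA, hfD⟩
        · rintro ⟨f, hfA, hfD⟩
          refine ⟨f, ⟨hfA, fun h0 => ?_⟩, hfD⟩
          rw [Set.mem_singleton_iff] at h0
          exact hD.1 (h0 ▸ hfD)
      rw [he]; exact hA
    · -- K3
      intro g hg
      rw [hiff]
      apply hup 𝔻₀ h𝔻₀ _ (fun D hD => hD.1)
      intro D hD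
      exact ⟨hcohF 𝔻₀ h𝔻₀ D hD, g, rfl, (hcohF 𝔻₀ h𝔻₀ D hD).2.1 hg⟩
    · -- K4
      intro A hA B hAB
      rw [hiff] at hA ⊢
      apply hup _ hA _ (fun D hD => hD.1)
      rintro D ⟨hD, f, hfA, hfD⟩
      exact ⟨hD, f, hAB hfA, hfD⟩
    · -- K5
      intro A hA F hdom
      rw [hiff] at hA ⊢
      apply hup _ hA _ (fun D hD => hD.1)
      rintro D ⟨hD, f, hfA, hfD⟩
      refine ⟨hD, F f, ⟨f, hfA, rfl⟩, ?_⟩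
      by_cases h : F f = f
      · rw [h]; exact hfD
      · have hd : F f - f ∈ Gpos Ω := by
          refine ⟨fun ω => ?_, sub_ne_zero_of_ne h⟩
          have h1 := hdom f hfA ω
          have h2 : ((F f - f : Gamble Ω) : Ω → ℝ) ω
              = (F f : Ω → ℝ) ω - (f : Ω → ℝ) ω := by
            simp
          have h3 : ((0 : Gamble Ω) : Ω → ℝ) ω = 0 := by simp
          rw [h2, h3]
          linarith
        have hsum := hD.2.2.2 f hfD _ (hD.2.1 hd)
        have heq : f + (F f - f) = F f := by abel
        rwa [heq] at hsum
    · -- K6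
      intro n hn A hA F hF
      rw [hiff]
      have hTn : ∀ m : ℕ, ∀ A : Fin (m + 1) → Set (Gamble Ω), (∀ i, A i ∈ K) →
          {D | CoherentD D ∧ ∀ i, (A i ∩ D).Nonempty} ∈ 𝔇 := by
        intro m
        induction m with
        | zero =>
          intro A hA
          have h0 := (hiff (A 0)).mp (hA 0)
          have he : {D : Set (Gamble Ω) | CoherentD D ∧ ∀ i, (A i ∩ D).Nonempty}
              = {D | CoherentD D ∧ (A 0 ∩ D).Nonempty} := by
            ext D
            simp only [Set.mem_setOf_eq, and_congr_right_iff]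
            intro _
            exact ⟨fun h => h 0, fun h i => by have hi : i = 0 := Fin.ext (by omega); subst hi; exact h⟩
          rw [he]; exact h0
        | succ m ih =>
          intro A hA
          have h3 := hinter _ ((hiff (A 0)).mp (hA 0)) _
            (ih (fun i => A i.succ) (fun i => hA _))
          have he : {D : Set (Gamble Ω) | CoherentD D ∧ (A 0 ∩ D).Nonempty} ∩
              {D | CoherentD D ∧ ∀ i : Fin (m + 1), (A i.succ ∩ D).Nonempty}
              = {D | CoherentD D ∧ ∀ i, (A i ∩ D).Nonempty} := by
            ext D
            simp only [Set.mem_inter_iff, Set.mem_setOf_eq]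
            constructor
            · rintro ⟨⟨hD, h0⟩, ⟨-, hs⟩⟩
              exact ⟨hD, fun i => Fin.cases h0 hs i⟩
            · rintro ⟨hD, h⟩
              exact ⟨⟨hD, h 0⟩, hD, fun i => h i.succ⟩
          rw [he] at h3; exact h3
      obtain ⟨m, rfl⟩ : ∃ m, n = m + 1 := ⟨n - 1, (Nat.succ_pred_eq_of_pos hn).symm⟩
      apply hup _ (hTn m A hA) _ (fun D hD => hD.1)
      rintro D ⟨hD, hmeet⟩
      have hgspec : ∀ i, (hmeet i).choose ∈ A i ∧ (hmeet i).choose ∈ D :=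
        fun i => (hmeet i).choose_spec
      have hrange : Set.range (fun i => (hmeet i).choose) ⊆ D := by
        rintro x ⟨i, rfl⟩
        exact (hgspec i).2
      have hFg : F (fun i => (hmeet i).choose) ∈ D :=
        posi_subset_coherent hD hrange (hF _ (fun i => (hgspec i).1))
      exact ⟨hD, F (fun i => (hmeet i).choose),
        ⟨fun i => (hmeet i).choose, fun i => (hgspec i).1, rfl⟩, hFg⟩
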